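/- Let R be a commutative ring and x_1, ..., x_n a regular sequence in R with I = (x_1, ..., x_n). Then multiplication by x_1 on the I-adic completion R^∧_I is injective, and the natural map R^∧_I/(x_1) → (R/x_1)^∧_I to the I-adic completion of R/(x_1) is an isomorphism. -/

import Mathlib

/-- The ideal generated by `x j` for `j < i`. -/
def prevIdeal {R : Type*} [CommRing R] {n : ℕ} (x : Fin n → R) (i : Fin n) : Ideal R :=
  Ideal.span {y | ∃ j : Fin n, j < i ∧ x j = y}

/-- `x` is a regular sequence: each `x i` is a non-zero-divisor modulo the previous ones. -/
def IsRegularSeq {R : Type*} [CommRing R] {n : ℕ} (x : Fin n → R) : Prop :=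
  ∀ i : Fin n, ∀ r : R, x i * r ∈ prevIdeal x i → r ∈ prevIdeal x i

section QuasiRegular

variable {R : Type*} [CommRing R]

open MvPolynomial

/-- Quasi-regularity of a sequence: any homogeneous polynomial of degree `d` whose value
lies in `I^(d+1)` has all coefficients in `I`. -/
def QRseq {m : ℕ} (v : Fin m → R) : Prop :=
  ∀ (d : ℕ) (F : MvPolynomial (Fin m) R), F.IsHomogeneous d →
    MvPolynomial.eval v F ∈ (Ideal.span (Set.range v)) ^ (d + 1) →
    ∀ c, F.coeff c ∈ Ideal.span (Set.range v)

lemma weight_one_cons {m : ℕ} (i : ℕ) (c : Fin m →₀ ℕ) :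
    (Finsupp.weight (1 : Fin (m+1) → ℕ)) (Finsupp.cons i c) =
      i + (Finsupp.weight (1 : Fin m → ℕ)) c := by
  simp only [Finsupp.weight_apply, Pi.one_apply, smul_eq_mul, mul_one]
  exact Finsupp.sum_cons m c i

lemma weight_one_eq_sum {m : ℕ} (c : Fin m →₀ ℕ) :
    (Finsupp.weight (1 : Fin m → ℕ)) c = ∑ i, c i := by
  simp only [Finsupp.weight_apply, Pi.one_apply, smul_eq_mul, mul_one]
  exact Finsupp.sum_fintype _ _ (fun _ => rfl)

lemma prod_pow_mem_span {m : ℕ} (v : Fin m → R) (c : Fin m →₀ ℕ) (s : Finset (Fin m)) :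
    (∏ i ∈ s, v i ^ c i) ∈ (Ideal.span (Set.range v)) ^ (∑ i ∈ s, c i) := by
  classical
  induction s using Finset.induction_on with
  | empty => simpa using Submodule.mem_top
  | @insert a s ha ih =>
    rw [Finset.prod_insert ha, Finset.sum_insert ha, pow_add]
    exact Ideal.mul_mem_mul
      (Ideal.pow_mem_pow (Ideal.subset_span (Set.mem_range_self a)) _) ih

lemma eval_mem_mul_pow {m : ℕ} (v : Fin m → R) {F : MvPolynomial (Fin m) R} {d : ℕ}
    (hF : F.IsHomogeneous d) (A : Ideal R) (hA : ∀ c, F.coeff c ∈ A) :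
    MvPolynomial.eval v F ∈ A * (Ideal.span (Set.range v)) ^ d := by
  rw [MvPolynomial.eval_eq']
  apply Submodule.sum_mem
  intro c hc
  have hd : (Finsupp.weight (1 : Fin m → ℕ)) c = d := hF (MvPolynomial.mem_support_iff.mp hc)
  have hsum : ∑ i, c i = d := by rw [← weight_one_eq_sum]; exact hd
  exact Ideal.mul_mem_mul (hA c) (hsum ▸ prod_pow_mem_span v c Finset.univ)

lemma eval_mem_pow {m : ℕ} (v : Fin m → R) {F : MvPolynomial (Fin m) R} {d : ℕ}
    (hF : F.IsHomogeneous d) :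
    MvPolynomial.eval v F ∈ (Ideal.span (Set.range v)) ^ d := by
  have := eval_mem_mul_pow v hF ⊤ (fun _ => Submodule.mem_top)
  rwa [Ideal.top_mul] at this

lemma exists_homog_of_mem_pow {m : ℕ} (v : Fin m → R) :
    ∀ (d : ℕ) (r : R), r ∈ (Ideal.span (Set.range v)) ^ d →
      ∃ F : MvPolynomial (Fin m) R, F.IsHomogeneous d ∧ MvPolynomial.eval v F = r := by
  intro d
  induction d with
  | zero =>
    intro r _
    exact ⟨MvPolynomial.C r, MvPolynomial.isHomogeneous_C _ _, MvPolynomial.eval_C _⟩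
  | succ d ih =>
    intro r hr
    rw [pow_succ] at hr
    refine Submodule.mul_induction_on hr ?_ ?_
    · intro a ha b hb
      obtain ⟨F, hF, hFe⟩ := ih a ha
      have hb' : b ∈ Submodule.span R (Set.range v) := hb
      obtain ⟨cf, hcf⟩ := (Submodule.mem_span_range_iff_exists_fun R).mp hb'
      refine ⟨F * ∑ i, MvPolynomial.C (cf i) * MvPolynomial.X i, ?_, ?_⟩
      · exact hF.mul (MvPolynomial.IsHomogeneous.sum _ _ _
          (fun i _ => MvPolynomial.isHomogeneous_C_mul_X _ _))
      · rw [map_mul, hFe, map_sum]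
        simp only [map_mul, MvPolynomial.eval_C, MvPolynomial.eval_X]
        rw [show ∑ i, cf i * v i = b from by simpa [smul_eq_mul] using hcf]
    · rintro p q ⟨F, h1, h2⟩ ⟨G, g1, g2⟩
      exact ⟨F + G, h1.add g1, by rw [map_add, h2, g2]⟩

lemma exists_homog_coeff_mem {m : ℕ} (v : Fin m → R) (d : ℕ) (r : R)
    (hr : r ∈ (Ideal.span (Set.range v)) ^ (d + 1)) :
    ∃ F : MvPolynomial (Fin m) R, F.IsHomogeneous d ∧
      (∀ c, F.coeff c ∈ Ideal.span (Set.range v)) ∧ MvPolynomial.eval v F = r := by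
  rw [pow_succ] at hr
  refine Submodule.mul_induction_on hr ?_ ?_
  · intro a ha b hb
    obtain ⟨F, hF, hFe⟩ := exists_homog_of_mem_pow v d a ha
    refine ⟨MvPolynomial.C b * F, hF.C_mul b, fun c => ?_, ?_⟩
    · rw [MvPolynomial.coeff_C_mul]
      exact Ideal.mul_mem_right _ _ hb
    · rw [map_mul, MvPolynomial.eval_C, hFe, mul_comm]
  · rintro p q ⟨F, h1, h2, h3⟩ ⟨G, g1, g2, g3⟩
    exact ⟨F + G, h1.add g1,
      fun c => by rw [MvPolynomial.coeff_add]; exact add_mem (h2 c) (g2 c),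
      by rw [map_add, h3, g3]⟩

lemma colon_pow {m : ℕ} (w : Fin m → R) (hQR : QRseq w) (t : R)
    (ht : ∀ r, t * r ∈ Ideal.span (Set.range w) → r ∈ Ideal.span (Set.range w)) :
    ∀ (s : ℕ) (r : R), t * r ∈ (Ideal.span (Set.range w)) ^ s →
      r ∈ (Ideal.span (Set.range w)) ^ s := by
  intro s
  induction s with
  | zero => intro r _; simpa using Submodule.mem_top
  | succ s ih =>
    intro r hr
    have hrs : r ∈ (Ideal.span (Set.range w)) ^ s :=
      ih r (Ideal.pow_le_pow_right (Nat.le_succ s) hr)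
    obtain ⟨F, hF, hFe⟩ := exists_homog_of_mem_pow w s r hrs
    have h2 : MvPolynomial.eval w (MvPolynomial.C t * F) ∈ (Ideal.span (Set.range w)) ^ (s + 1) := by
      rw [map_mul, MvPolynomial.eval_C, hFe]; exact hr
    have hcoeff : ∀ c, F.coeff c ∈ Ideal.span (Set.range w) := by
      intro c
      have h3 := hQR s (MvPolynomial.C t * F) (hF.C_mul t) h2 c
      rw [MvPolynomial.coeff_C_mul] at h3
      exact ht _ h3
    have h4 := eval_mem_mul_pow w hF _ hcoeff
    rw [hFe] at h4
    rwa [← pow_succ'] at h4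

lemma isRegularSeq_restrict {m : ℕ} (v : Fin (m+1) → R) (hv : IsRegularSeq v) :
    IsRegularSeq (v ∘ Fin.castSucc) := by
  intro i r h
  have hset : prevIdeal (v ∘ Fin.castSucc) i = prevIdeal v i.castSucc := by
    unfold prevIdeal
    congr 1
    ext y
    constructor
    · rintro ⟨j, hj, rfl⟩
      exact ⟨j.castSucc, hj, rfl⟩
    · rintro ⟨j, hj, rfl⟩
      have hj1 : j.1 < i.1 := hj
      have hjm : j.1 < m := hj1.trans i.isLt
      refine ⟨⟨j.1, hjm⟩, hj1, ?_⟩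
      show v (Fin.castSucc ⟨j.1, hjm⟩) = v j
      congr 1
  rw [hset] at h ⊢
  exact hv i.castSucc r h

lemma prevIdeal_last {m : ℕ} (v : Fin (m+1) → R) :
    prevIdeal v (Fin.last m) = Ideal.span (Set.range (v ∘ Fin.castSucc)) := by
  unfold prevIdeal
  congr 1
  ext y
  constructor
  · rintro ⟨j, hj, rfl⟩
    have hjm : j.1 < m := hj
    refine ⟨⟨j.1, hjm⟩, ?_⟩
    show v (Fin.castSucc ⟨j.1, hjm⟩) = v j
    congr 1
  · rintro ⟨j, rfl⟩
    exact ⟨j.castSucc, j.isLt, rfl⟩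

lemma isRegularSeq_qrseq : ∀ {m : ℕ} (v : Fin m → R), IsRegularSeq v → QRseq v := by
  intro m
  induction m with
  | zero =>
    intro v _ d F hF hFe c
    obtain ⟨r, rfl⟩ := MvPolynomial.C_surjective (Fin 0) F
    have h0 : Ideal.span (Set.range v) = ⊥ := by
      rw [Set.range_eq_empty, Ideal.span_empty]
    rw [MvPolynomial.eval_C, h0, ← Ideal.zero_eq_bot, zero_pow (Nat.succ_ne_zero d)] at hFe
    have hr : r = 0 := hFe
    subst hr
    simp only [map_zero, MvPolynomial.coeff_zero]
    exact Submodule.zero_mem _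
  | succ m IH =>
    intro v hv
    -- notation
    have hwreg : IsRegularSeq (v ∘ Fin.castSucc) := isRegularSeq_restrict v hv
    set w : Fin m → R := v ∘ Fin.castSucc with hwdef
    set t : R := v (Fin.last m) with htdef
    have hQRw : QRseq w := IH w hwreg
    have ht : ∀ r, t * r ∈ Ideal.span (Set.range w) → r ∈ Ideal.span (Set.range w) := by
      intro r h
      have := hv (Fin.last m) r (by rwa [prevIdeal_last])
      rwa [prevIdeal_last] at this
    have hJI : Ideal.span (Set.range w) ≤ Ideal.span (Set.range v) :=
      Ideal.span_mono (Set.range_comp_subset_range _ _)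
    have htI : t ∈ Ideal.span (Set.range v) := Ideal.subset_span ⟨Fin.last m, rfl⟩
    -- the rotation
    set ρ : Fin (m+1) ≃ Fin (m+1) := finRotate (m+1) with hρdef
    have hcomp : (Fin.cons t w : Fin (m+1) → R) ∘ ρ = v := by
      funext j
      rcases Fin.eq_castSucc_or_eq_last j with ⟨j', rfl⟩ | rfl
      · have : ρ j'.castSucc = j'.succ := by
          rw [hρdef, finRotate_succ_apply, Fin.coeSucc_eq_succ]
        simp only [Function.comp_apply, this, Fin.cons_succ]
        rfl
      · have : ρ (Fin.last m) = 0 := by rw [hρdef, finRotate_last]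
        simp [this, htdef]
    intro d
    induction d with
    | zero =>
      intro F hF hFe c
      by_cases hc : F.coeff c = 0
      · rw [hc]; exact Submodule.zero_mem _
      · have hc0 : c = 0 := by
          have hw := hF hc
          have hsum : ∑ i, c i = 0 := by rw [← weight_one_eq_sum]; exact hw
          ext i
          exact Finset.sum_eq_zero_iff.mp hsum i (Finset.mem_univ i)
      -- F = C (coeff 0 F)
        have hFC : F = MvPolynomial.C (F.coeff 0) := by
          ext c'
          rw [MvPolynomial.coeff_C]
          by_cases h0 : (0 : Fin (m+1) →₀ ℕ) = c'
          · rw [if_pos h0, ← h0]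
          · rw [if_neg h0]
            by_contra hne
            have hw := hF hne
            have hsum : ∑ i, c' i = 0 := by rw [← weight_one_eq_sum]; exact hw
            exact h0 (by ext i; exact (Finset.sum_eq_zero_iff.mp hsum i (Finset.mem_univ i)).symm)
        subst hc0
        rw [hFC, MvPolynomial.eval_C, pow_one] at hFe
        exact hFe
    | succ d ihd =>
      intro F hF hFe c
      -- step 1: reduce to the case eval = 0
      obtain ⟨F₀, hF₀, hF₀c, hF₀e⟩ := exists_homog_coeff_mem v (d+1) _ hFe
      suffices hsuff : ∀ c, (F - F₀).coeff c ∈ Ideal.span (Set.range v) by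
        have h1 := hsuff c
        rw [MvPolynomial.coeff_sub] at h1
        have : F.coeff c = (F.coeff c - F₀.coeff c) + F₀.coeff c := by ring
        rw [this]
        exact add_mem h1 (hF₀c c)
      have hF₁ : (F - F₀).IsHomogeneous (d+1) := hF.sub hF₀
      have hF₁e : MvPolynomial.eval v (F - F₀) = 0 := by rw [map_sub, hF₀e, sub_self]
      set F₁ := F - F₀ with hF₁def
      clear hF₀c hF₀e hFe hF hF₀ hF₁def
      -- step 2: rename so that the distinguished variable is 0
      set F' := MvPolynomial.rename (⇑ρ) F₁ with hF'def
      have hF' : F'.IsHomogeneous (d+1) := hF₁.rename_isHomogeneous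
      have hF'e : MvPolynomial.eval (Fin.cons t w) F' = 0 := by
        rw [hF'def, MvPolynomial.eval_rename, hcomp, hF₁e]
      suffices hS : ∀ c', F'.coeff c' ∈ Ideal.span (Set.range v) by
        intro c''
        rw [← MvPolynomial.coeff_rename_mapDomain (⇑ρ) ρ.injective F₁ c'']
        exact hS _
      -- step 3: pass through finSuccEquiv
      set G := MvPolynomial.finSuccEquiv R m F' with hGdef
      have hcoeffG : ∀ (i : ℕ) (mm : Fin m →₀ ℕ),
          (G.coeff i).coeff mm = F'.coeff (mm.cons i) := by
        intro i mm
        rw [hGdef]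
        exact MvPolynomial.finSuccEquiv_coeff_coeff mm F' i
      suffices hS2 : ∀ (i : ℕ) (mm : Fin m →₀ ℕ),
          (G.coeff i).coeff mm ∈ Ideal.span (Set.range v) by
        intro c'
        have h2 := hS2 (c' 0) (Finsupp.tail c')
        rwa [hcoeffG, Finsupp.cons_tail] at h2
      set p : Polynomial R := Polynomial.map (MvPolynomial.eval w) G with hpdef
      have hp : Polynomial.eval t p = 0 := by
        rw [hpdef, hGdef, ← MvPolynomial.eval_eq_eval_mv_eval']
        exact hF'e
      set G₀ : MvPolynomial (Fin m) R := G.coeff 0 with hG₀def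
      have hG₀ : G₀.IsHomogeneous (d+1) :=
        hF'.finSuccEquiv_coeff_isHomogeneous 0 (d+1) (by omega)
      have hap : t * Polynomial.eval t p.divX + MvPolynomial.eval w G₀ = 0 := by
        have h3 := congrArg (Polynomial.eval t) (Polynomial.X_mul_divX_add p)
        rw [hp] at h3
        simp only [Polynomial.eval_add, Polynomial.eval_mul, Polynomial.eval_X,
          Polynomial.eval_C] at h3
        rw [← h3]
        congr 1
        rw [hpdef, Polynomial.coeff_map]
      set a : R := Polynomial.eval t p.divX with hadef
      have hta : t * a ∈ (Ideal.span (Set.range w)) ^ (d+1) := by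
        have h5 : t * a = - MvPolynomial.eval w G₀ := eq_neg_of_add_eq_zero_left hap
        rw [h5]
        exact neg_mem (eval_mem_pow w hG₀)
      have haJ : a ∈ (Ideal.span (Set.range w)) ^ (d+1) := colon_pow w hQRw t ht (d+1) a hta
      -- step 4: the part divisible by the distinguished variable
      set H : MvPolynomial (Fin (m+1)) R := (MvPolynomial.finSuccEquiv R m).symm G.divX
        with hHdef
      have hGH : MvPolynomial.finSuccEquiv R m H = G.divX := by
        rw [hHdef]; exact AlgEquiv.apply_symm_apply _ _
      have hHcoeff : ∀ (i : ℕ) (mm : Fin m →₀ ℕ),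
          H.coeff (mm.cons i) = (G.coeff (i+1)).coeff mm := by
        intro i mm
        rw [← MvPolynomial.finSuccEquiv_coeff_coeff mm H i, hGH, Polynomial.coeff_divX]
      have hH : H.IsHomogeneous d := by
        intro cc hcc
        have hcc' : H.coeff ((Finsupp.tail cc).cons (cc 0)) ≠ 0 := by
          rwa [Finsupp.cons_tail]
        rw [hHcoeff, hcoeffG] at hcc'
        have h6 := hF' hcc'
        rw [weight_one_cons] at h6
        have : (Finsupp.weight (1 : Fin (m+1) → ℕ)) cc =
            cc 0 + (Finsupp.weight (1 : Fin m → ℕ)) (Finsupp.tail cc) := by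
          conv_lhs => rw [← Finsupp.cons_tail cc]
          rw [weight_one_cons]
        omega
      have hmapdivX : Polynomial.map (MvPolynomial.eval w) G.divX = p.divX := by
        ext k
        rw [Polynomial.coeff_map, Polynomial.coeff_divX, Polynomial.coeff_divX, hpdef,
          Polynomial.coeff_map]
      have hHe : MvPolynomial.eval (Fin.cons t w) H = a := by
        rw [MvPolynomial.eval_eq_eval_mv_eval', hGH, hmapdivX, hadef]
      -- apply the inner induction hypothesis to (rename ρ.symm H)
      have hvρ : v ∘ (⇑ρ.symm) = (Fin.cons t w : Fin (m+1) → R) := by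
        funext j
        rw [← hcomp]
        simp
      have hHren : ∀ cc, (MvPolynomial.rename (⇑ρ.symm) H).coeff cc ∈
          Ideal.span (Set.range v) := by
        apply ihd
        · exact hH.rename_isHomogeneous
        · rw [MvPolynomial.eval_rename, hvρ, hHe]
          exact Ideal.pow_right_mono hJI (d+1) haJ
      have hHmem : ∀ cc, H.coeff cc ∈ Ideal.span (Set.range v) := by
        intro cc
        have h7 := hHren (Finsupp.mapDomain (⇑ρ.symm) cc)
        rwa [MvPolynomial.coeff_rename_mapDomain (⇑ρ.symm) ρ.symm.injective H cc] at h7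
      -- conclude
      intro i mm
      match i with
      | (i+1) =>
        rw [← hHcoeff i mm]
        exact hHmem _
      | 0 =>
        obtain ⟨P, hP, hPe⟩ := exists_homog_of_mem_pow w (d+1) a haJ
        have hQhom : (G₀ + MvPolynomial.C t * P).IsHomogeneous (d+1) := hG₀.add (hP.C_mul t)
        have hQe : MvPolynomial.eval w (G₀ + MvPolynomial.C t * P) = 0 := by
          rw [map_add, map_mul, MvPolynomial.eval_C, hPe]
          linear_combination hap
        have hQc := hQRw (d+1) (G₀ + MvPolynomial.C t * P) hQhom
          (by rw [hQe]; exact Submodule.zero_mem _) mm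
        have h8 : G₀.coeff mm = (G₀ + MvPolynomial.C t * P).coeff mm - t * P.coeff mm := by
          rw [MvPolynomial.coeff_add, MvPolynomial.coeff_C_mul]; ring
        rw [← hG₀def, h8]
        exact sub_mem (hJI hQc) (Ideal.mul_mem_right _ _ htI)

/-- The key colon-ideal lemma: for a regular sequence `v` generating `I` and any member
`y` of the sequence, `y * r ∈ I^(k+1)` implies `r ∈ I^k`. -/
lemma key_colon {m : ℕ} (v : Fin m → R) (hv : IsRegularSeq v) {y : R} (hy : y ∈ Set.range v) :
    ∀ (k : ℕ) (r : R), y * r ∈ (Ideal.span (Set.range v)) ^ (k+1) →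
      r ∈ (Ideal.span (Set.range v)) ^ k := by
  have hQR := isRegularSeq_qrseq v hv
  intro k
  induction k with
  | zero => intro r _; simpa using Submodule.mem_top
  | succ k ih =>
    intro r hr
    have hrk : r ∈ (Ideal.span (Set.range v)) ^ k :=
      ih r (Ideal.pow_le_pow_right (Nat.le_succ _) hr)
    obtain ⟨F, hF, hFe⟩ := exists_homog_of_mem_pow v k r hrk
    obtain ⟨i0, rfl⟩ := hy
    have hXF : (MvPolynomial.X i0 * F).IsHomogeneous (k+1) := by
      have := (MvPolynomial.isHomogeneous_X R i0).mul hF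
      rwa [add_comm] at this
    have hXFe : MvPolynomial.eval v (MvPolynomial.X i0 * F) ∈
        (Ideal.span (Set.range v)) ^ (k+1+1) := by
      rw [map_mul, MvPolynomial.eval_X, hFe]
      exact hr
    have hc : ∀ c, F.coeff c ∈ Ideal.span (Set.range v) := by
      intro c
      have h2 := hQR (k+1) (MvPolynomial.X i0 * F) hXF hXFe (Finsupp.single i0 1 + c)
      rwa [MvPolynomial.coeff_X_mul] at h2
    have h3 := eval_mem_mul_pow v hF _ hc
    rw [hFe] at h3
    rwa [← pow_succ'] at h3

end QuasiRegular

section Completion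

variable {R : Type*} [CommRing R]

lemma smul_top_eq_pow (I : Ideal R) (n : ℕ) : (I ^ n • ⊤ : Ideal R) = I ^ n := by
  ext x; simp

lemma val_algebraMap (I : Ideal R) (r : R) (n : ℕ) :
    (algebraMap R (AdicCompletion I R) r).val n =
      Ideal.Quotient.mk (I ^ n • ⊤ : Ideal R) r := by
  show algebraMap R (R ⧸ (I ^ n • ⊤ : Ideal R)) r = _
  rw [Ideal.Quotient.algebraMap_eq]

lemma val_algebraMap_mul (I : Ideal R) (r b : R) (y : AdicCompletion I R) (n : ℕ)
    (hb : y.val n = Submodule.Quotient.mk b) :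
    (algebraMap R (AdicCompletion I R) r * y).val n = Submodule.Quotient.mk (r * b) := by
  rw [AdicCompletion.val_mul, val_algebraMap I r n, hb]
  simp only [Ideal.Quotient.mk_eq_mk, ← map_mul]

end Completion

/-- For a regular sequence `x_1, ..., x_n` generating `I`: multiplication by `x_1` is
injective on the `I`-adic completion `R^∧_I`, and the natural map
`R^∧_I/(x_1) → (R/x_1)^∧_I` is an isomorphism. The latter is expressed by saying that the
natural map `R^∧_I → (R/x_1)^∧_I` is surjective with kernel the ideal generated by the
image of `x_1`. -/
theorem completion_mul_injective_and_quotient_iso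
    {R : Type*} [CommRing R] {n : ℕ} (hn : 0 < n) (x : Fin n → R)
    (hreg : IsRegularSeq x) (I : Ideal R) (hI : I = Ideal.span (Set.range x)) :
    Function.Injective
      (fun y : AdicCompletion I R => algebraMap R (AdicCompletion I R) (x ⟨0, hn⟩) * y) ∧
    Function.Surjective (AdicCompletion.map I (Ideal.span {x ⟨0, hn⟩}).mkQ) ∧
    ∀ y : AdicCompletion I R,
      AdicCompletion.map I (Ideal.span {x ⟨0, hn⟩}).mkQ y = 0 ↔
        ∃ z : AdicCompletion I R,
          y = algebraMap R (AdicCompletion I R) (x ⟨0, hn⟩) * z := by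
  classical
  subst hI
  set x0 : R := x ⟨0, hn⟩ with hx0def
  set I : Ideal R := Ideal.span (Set.range x) with hIdef
  have key : ∀ (k : ℕ) (r : R), x0 * r ∈ I ^ (k + 1) → r ∈ I ^ k :=
    key_colon x hreg ⟨⟨0, hn⟩, rfl⟩
  have hsmul : ∀ k : ℕ, (I ^ k • ⊤ : Ideal R) = I ^ k := fun k => smul_top_eq_pow I k
  have hinj0 : ∀ y : AdicCompletion I R,
      algebraMap R (AdicCompletion I R) x0 * y = 0 → y = 0 := by
    intro y hy
    obtain ⟨a, rfl⟩ := AdicCompletion.mk_surjective I R y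
    have hmem : ∀ k, x0 * a k ∈ (I ^ k : Ideal R) := by
      intro k
      have h1 : (algebraMap R (AdicCompletion I R) x0 * AdicCompletion.mk I R a).val k = 0 := by
        rw [hy]; rfl
      rw [val_algebraMap_mul I x0 (a k) _ k
        (by rw [AdicCompletion.mk_apply_coe, Submodule.mkQ_apply])] at h1
      have h2 := (Submodule.Quotient.mk_eq_zero _).mp h1
      rwa [hsmul k] at h2
    apply AdicCompletion.ext
    intro k
    rw [AdicCompletion.mk_apply_coe, Submodule.mkQ_apply, AdicCompletion.val_zero]
    have hstep : (Submodule.Quotient.mk (a k) : R ⧸ (I ^ k • ⊤ : Submodule R R)) =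
        Submodule.Quotient.mk (a (k + 1)) := a.property (Nat.le_succ k)
    rw [hstep, Pi.zero_apply, Submodule.Quotient.mk_eq_zero, hsmul k]
    exact key k (a (k + 1)) (hmem (k + 1))
  refine ⟨?_, ?_, ?_⟩
  · intro y1 y2 h
    have h' : algebraMap R (AdicCompletion I R) x0 * y1 =
        algebraMap R (AdicCompletion I R) x0 * y2 := h
    have h0 : algebraMap R (AdicCompletion I R) x0 * (y1 - y2) = 0 := by
      rw [mul_sub, h', sub_self]
    exact sub_eq_zero.mp (hinj0 _ h0)
  · exact AdicCompletion.map_surjective I (Submodule.mkQ_surjective _)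
  · intro y
    constructor
    · intro hy
      obtain ⟨a, rfl⟩ := AdicCompletion.mk_surjective I R y
      have hmem : ∀ k, a k ∈ Ideal.span {x0} ⊔ (I ^ k : Ideal R) := by
        intro k
        have h1 : (AdicCompletion.map I (Ideal.span {x0}).mkQ
            (AdicCompletion.mk I R a)).val k = 0 := by
          rw [hy]; rfl
        rw [AdicCompletion.map_val_apply, AdicCompletion.mk_apply_coe,
          Submodule.mkQ_apply, LinearMap.reduceModIdeal_apply] at h1
        have h2 := (Submodule.Quotient.mk_eq_zero _).mp h1
        have h3 : (I ^ k • ⊤ : Submodule R (R ⧸ Ideal.span {x0})) =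
            Submodule.map (Ideal.span {x0}).mkQ (I ^ k • ⊤ : Submodule R R) := by
          rw [Submodule.map_smul'', Submodule.map_top, Submodule.range_mkQ]
        rw [h3] at h2
        have h4 : a k ∈ Submodule.comap (Ideal.span {x0}).mkQ
            (Submodule.map (Ideal.span {x0}).mkQ (I ^ k • ⊤ : Submodule R R)) := h2
        rw [Submodule.comap_map_mkQ, hsmul k] at h4
        exact h4
      have hchoice : ∀ k, ∃ b, a k - x0 * b ∈ (I ^ k : Ideal R) := by
        intro k
        obtain ⟨s, hs, c, hc, hcs⟩ := Submodule.mem_sup.mp (hmem k)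
        obtain ⟨b, rfl⟩ := Ideal.mem_span_singleton.mp hs
        exact ⟨b, by rw [← hcs]; simpa using hc⟩
      choose b hb using hchoice
      have hcau : ∀ k, b (k + 1) ≡ b (k + 2) [SMOD (I ^ k • ⊤ : Submodule R R)] := by
        intro k
        rw [SModEq.sub_mem, hsmul k]
        apply key k
        have e1 : x0 * (b (k + 1) - b (k + 2)) =
            (a (k + 1) - a (k + 2)) - (a (k + 1) - x0 * b (k + 1)) +
              (a (k + 2) - x0 * b (k + 2)) := by ring
        rw [e1]
        refine add_mem (sub_mem ?_ (hb (k + 1))) ?_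
        · have h5 := a.property (Nat.le_succ (k + 1))
          rw [SModEq.sub_mem, hsmul (k + 1)] at h5
          exact h5
        · exact Ideal.pow_le_pow_right (Nat.le_succ _) (hb (k + 2))
      refine ⟨AdicCompletion.mk I R
        (AdicCompletion.AdicCauchySequence.mk I R (fun k => b (k + 1)) hcau), ?_⟩
      apply AdicCompletion.ext
      intro k
      rw [val_algebraMap_mul I x0 (b (k + 1)) _ k
        (by rw [AdicCompletion.mk_apply_coe, Submodule.mkQ_apply]; rfl)]
      rw [AdicCompletion.mk_apply_coe, Submodule.mkQ_apply, Submodule.Quotient.eq, hsmul k]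
      have e2 : a k - x0 * b (k + 1) =
          (a k - a (k + 1)) + (a (k + 1) - x0 * b (k + 1)) := by ring
      rw [e2]
      refine add_mem ?_ (Ideal.pow_le_pow_right (Nat.le_succ _) (hb (k + 1)))
      have h6 := a.property (Nat.le_succ k)
      rw [SModEq.sub_mem, hsmul k] at h6
      exact h6
    · rintro ⟨z, rfl⟩
      obtain ⟨bz, rfl⟩ := AdicCompletion.mk_surjective I R z
      apply AdicCompletion.ext
      intro k
      rw [AdicCompletion.map_val_apply,
        val_algebraMap_mul I x0 (bz k) _ k
          (by rw [AdicCompletion.mk_apply_coe, Submodule.mkQ_apply]),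
        LinearMap.reduceModIdeal_apply, AdicCompletion.val_zero]
      have h7 : (Ideal.span {x0}).mkQ (x0 * bz k) = 0 := by
        rw [Submodule.mkQ_apply, Submodule.Quotient.mk_eq_zero]
        exact Ideal.mem_span_singleton.mpr (Dvd.intro _ rfl)
      rw [h7, Submodule.Quotient.mk_zero, Pi.zero_apply]
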